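/- If a financial system is acyclic (its auxiliary graph contains no directed cycle) and all its external assets and notionals are rational numbers, then every clearing vector of the system has all coordinates rational. -/

import Mathlib

open Finset

/-- The liability of bank `i` to bank `j` under recovery-rate vector `r`. -/
def liab {n : ℕ} (c : Fin n → Fin n → ℝ) (cds : Fin n → Fin n → Fin n → ℝ)
    (r : Fin n → ℝ) (i j : Fin n) : ℝ :=
  c i j + ∑ R : Fin n, (1 - r R) * cds i j R

/-- The total liability of bank `i` under recovery-rate vector `r`. -/
def totLiab {n : ℕ} (c : Fin n → Fin n → ℝ) (cds : Fin n → Fin n → Fin n → ℝ)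
    (r : Fin n → ℝ) (i : Fin n) : ℝ :=
  ∑ j : Fin n, liab c cds r i j

/-- The assets of bank `i` under recovery-rate vector `r`
(external assets plus incoming payments `p j i r = r j * liab c cds r j i`). -/
def assets {n : ℕ} (e : Fin n → ℝ) (c : Fin n → Fin n → ℝ)
    (cds : Fin n → Fin n → Fin n → ℝ) (r : Fin n → ℝ) (i : Fin n) : ℝ :=
  e i + ∑ j : Fin n, r j * liab c cds r j i

/-- `r` is a clearing recovery-rate vector. -/
def IsClearing {n : ℕ} (e : Fin n → ℝ) (c : Fin n → Fin n → ℝ)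
    (cds : Fin n → Fin n → Fin n → ℝ) (r : Fin n → ℝ) : Prop :=
  (∀ i, 0 ≤ r i ∧ r i ≤ 1) ∧
  ∀ i, (0 < totLiab c cds r i →
          r i = min 1 (assets e c cds r i / totLiab c cds r i)) ∧
       (totLiab c cds r i = 0 → r i = 1)

/-- `(e, c, cds)` is a financial system. -/
def IsFinSys {n : ℕ} (e : Fin n → ℝ) (c : Fin n → Fin n → ℝ)
    (cds : Fin n → Fin n → Fin n → ℝ) : Prop :=
  (∀ i, 0 ≤ e i) ∧ (∀ i j, 0 ≤ c i j) ∧ (∀ i, c i i = 0) ∧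
  (∀ i j R, 0 ≤ cds i j R) ∧
  (∀ i j R, ¬(i ≠ j ∧ i ≠ R ∧ j ≠ R) → cds i j R = 0)

/-- Arc relation of the auxiliary graph: a blue arc `(u,v)` when `c u v > 0`,
an orange arc `(u,v)` when `cds u v R > 0` for some `R`, and
a red arc `(u,v)` when `v` is the debtor of a CDS with reference bank `u`. -/
def AuxAdj {n : ℕ} (c : Fin n → Fin n → ℝ) (cds : Fin n → Fin n → Fin n → ℝ)
    (u v : Fin n) : Prop :=
  0 < c u v ∨ (∃ R, 0 < cds u v R) ∨ (∃ j, 0 < cds v j u)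

/-- The auxiliary graph contains no directed cycle. -/
def AuxAcyclic {n : ℕ} (c : Fin n → Fin n → ℝ)
    (cds : Fin n → Fin n → Fin n → ℝ) : Prop :=
  ∀ i : Fin n, ¬ Relation.TransGen (AuxAdj c cds) i i


def Rtl (x : ℝ) : Prop := ∃ q : ℚ, x = q

lemma rtl_zero : Rtl 0 := ⟨0, by norm_num⟩
lemma rtl_one : Rtl 1 := ⟨1, by norm_num⟩
lemma rtl_add {x y : ℝ} (hx : Rtl x) (hy : Rtl y) : Rtl (x + y) := by
  obtain ⟨a, rfl⟩ := hx; obtain ⟨b, rfl⟩ := hy; exact ⟨a + b, by push_cast; ring⟩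
lemma rtl_mul {x y : ℝ} (hx : Rtl x) (hy : Rtl y) : Rtl (x * y) := by
  obtain ⟨a, rfl⟩ := hx; obtain ⟨b, rfl⟩ := hy; exact ⟨a * b, by push_cast; ring⟩
lemma rtl_sub {x y : ℝ} (hx : Rtl x) (hy : Rtl y) : Rtl (x - y) := by
  obtain ⟨a, rfl⟩ := hx; obtain ⟨b, rfl⟩ := hy; exact ⟨a - b, by push_cast; ring⟩
lemma rtl_div {x y : ℝ} (hx : Rtl x) (hy : Rtl y) : Rtl (x / y) := by
  obtain ⟨a, rfl⟩ := hx; obtain ⟨b, rfl⟩ := hy; exact ⟨a / b, by push_cast; ring⟩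
lemma rtl_min {x y : ℝ} (hx : Rtl x) (hy : Rtl y) : Rtl (min x y) := by
  obtain ⟨a, rfl⟩ := hx; obtain ⟨b, rfl⟩ := hy
  exact ⟨min a b, by rw [Rat.cast_min]⟩
lemma rtl_sum {α : Type*} {s : Finset α} {f : α → ℝ} (h : ∀ a ∈ s, Rtl (f a)) :
    Rtl (∑ a ∈ s, f a) := by
  classical
  induction s using Finset.induction with
  | empty => simpa using rtl_zero
  | insert a s hx ih =>
    rw [Finset.sum_insert hx]
    exact rtl_add (h _ (Finset.mem_insert_self _ _))
      (ih fun a ha => h a (Finset.mem_insert_of_mem ha))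

/-- In an acyclic financial system with rational data, every clearing vector is rational. -/
theorem acyclic_clearing_rational {n : ℕ} (e : Fin n → ℝ) (c : Fin n → Fin n → ℝ)
    (cds : Fin n → Fin n → Fin n → ℝ) (hfs : IsFinSys e c cds)
    (hac : AuxAcyclic c cds)
    (he : ∀ i, ∃ q : ℚ, e i = q)
    (hc : ∀ i j, ∃ q : ℚ, c i j = q)
    (hcds : ∀ i j R, ∃ q : ℚ, cds i j R = q) :
    ∀ r : Fin n → ℝ, IsClearing e c cds r → ∀ i, ∃ q : ℚ, r i = q := by
  intro r hr
  have hwf : WellFounded (Relation.TransGen (AuxAdj c cds)) := by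
    have : IsIrrefl (Fin n) (Relation.TransGen (AuxAdj c cds)) := ⟨hac⟩
    exact Finite.wellFounded_of_trans_of_irrefl _
  intro i
  induction i using hwf.induction with
  | _ i IH =>
    have hL : Rtl (totLiab c cds r i) := by
      apply rtl_sum; intro j _
      apply rtl_add (hc i j)
      apply rtl_sum; intro R _
      by_cases h : cds i j R = 0
      · rw [h]; simpa using rtl_zero
      · have hpos : 0 < cds i j R := lt_of_le_of_ne (hfs.2.2.2.1 i j R) (Ne.symm h)
        have hR : Rtl (r R) :=
          IH R (Relation.TransGen.single (Or.inr (Or.inr ⟨j, hpos⟩)))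
        exact rtl_mul (rtl_sub rtl_one hR) (hcds i j R)
    have hA : Rtl (assets e c cds r i) := by
      apply rtl_add (he i)
      apply rtl_sum; intro j _
      have hsplit : r j * liab c cds r j i
          = r j * c j i + ∑ R : Fin n, r j * ((1 - r R) * cds j i R) := by
        simp [liab, mul_add, Finset.mul_sum]
      rw [hsplit]
      apply rtl_add
      · by_cases h : c j i = 0
        · rw [h]; simpa using rtl_zero
        · have hpos : 0 < c j i := lt_of_le_of_ne (hfs.2.1 j i) (Ne.symm h)
          exact rtl_mul (IH j (Relation.TransGen.single (Or.inl hpos))) (hc j i)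
      · apply rtl_sum; intro R _
        by_cases h : cds j i R = 0
        · rw [h]; simpa using rtl_zero
        · have hpos : 0 < cds j i R := lt_of_le_of_ne (hfs.2.2.2.1 j i R) (Ne.symm h)
          have hji : AuxAdj c cds j i := Or.inr (Or.inl ⟨R, hpos⟩)
          have hRj : AuxAdj c cds R j := Or.inr (Or.inr ⟨i, hpos⟩)
          have hj : Rtl (r j) := IH j (Relation.TransGen.single hji)
          have hR : Rtl (r R) :=
            IH R (Relation.TransGen.head hRj (Relation.TransGen.single hji))
          exact rtl_mul hj (rtl_mul (rtl_sub rtl_one hR) (hcds j i R))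
    have hLnn : 0 ≤ totLiab c cds r i := by
      apply Finset.sum_nonneg; intro j _
      apply add_nonneg (hfs.2.1 i j)
      apply Finset.sum_nonneg; intro R _
      exact mul_nonneg (by linarith [(hr.1 R).2]) (hfs.2.2.2.1 i j R)
    rcases eq_or_lt_of_le hLnn with h0 | hpos
    · rw [(hr.2 i).2 h0.symm]; exact rtl_one
    · rw [(hr.2 i).1 hpos]
      exact rtl_min rtl_one (rtl_div hA hL)
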